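/- If ψ ∈ L²(Ω, 𝒜, ν) and μ(A) = |⟨χ_A, ψ⟩|² for A ∈ 𝒜, then μ is a grade-2 additive q-measure: for mutually disjoint A, B, C ∈ 𝒜, μ(A∪B∪C) = μ(A∪B) + μ(A∪C) + μ(B∪C) − μ(A) − μ(B) − μ(C). -/

import Mathlib

open MeasureTheory

/-- The indicator function `χ_A` of a measurable set, as an element of complex `L²(ν)`. -/
noncomputable def chiC {Ω : Type*} [MeasurableSpace Ω] (ν : Measure Ω) [IsProbabilityMeasure ν]
    {A : Set Ω} (hA : MeasurableSet A) : Lp ℂ 2 ν :=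
  indicatorConstLp 2 hA (measure_ne_top ν A) (1 : ℂ)

lemma chiC_union {Ω : Type*} [MeasurableSpace Ω] (ν : Measure Ω) [IsProbabilityMeasure ν]
    {A B : Set Ω} (hA : MeasurableSet A) (hB : MeasurableSet B) (h : Disjoint A B) :
    chiC ν (hA.union hB) = chiC ν hA + chiC ν hB := by
  unfold chiC
  rw [← indicatorConstLp_disjoint_union hA hB (measure_ne_top ν A) (measure_ne_top ν B) h (1 : ℂ)]

/-- The q-measure `μ(A) = |⟨χ_A, ψ⟩|²` of the pure q-probability operator `|ψ⟩⟨ψ|`. -/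
noncomputable def qMeasPure {Ω : Type*} [MeasurableSpace Ω] (ν : Measure Ω)
    [IsProbabilityMeasure ν] (ψ : Lp ℂ 2 ν) {A : Set Ω} (hA : MeasurableSet A) : ℝ :=
  ‖(inner ℂ (chiC ν hA) ψ : ℂ)‖ ^ 2

/-- If `ψ ∈ L²(Ω, 𝒜, ν)` and `μ(A) = |⟨χ_A, ψ⟩|²`, then `μ` is grade-2
additive: for mutually disjoint measurable `A, B, C`,
`μ(A∪B∪C) = μ(A∪B) + μ(A∪C) + μ(B∪C) − μ(A) − μ(B) − μ(C)`. -/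
theorem stmt12 {Ω : Type*} [MeasurableSpace Ω] (ν : Measure Ω) [IsProbabilityMeasure ν]
    (ψ : Lp ℂ 2 ν)
    (A B C : Set Ω) (hA : MeasurableSet A) (hB : MeasurableSet B) (hC : MeasurableSet C)
    (hAB : Disjoint A B) (hAC : Disjoint A C) (hBC : Disjoint B C) :
    qMeasPure ν ψ ((hA.union hB).union hC)
      = qMeasPure ν ψ (hA.union hB) + qMeasPure ν ψ (hA.union hC) + qMeasPure ν ψ (hB.union hC)
        - qMeasPure ν ψ hA - qMeasPure ν ψ hB - qMeasPure ν ψ hC := by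
  have h1 : chiC ν ((hA.union hB).union hC) = chiC ν hA + chiC ν hB + chiC ν hC := by
    rw [chiC_union ν (hA.union hB) hC (Disjoint.union_left hAC hBC),
        chiC_union ν hA hB hAB]
  unfold qMeasPure
  rw [h1, chiC_union ν hA hB hAB, chiC_union ν hA hC hAC, chiC_union ν hB hC hBC]
  simp only [inner_add_left]
  set a : ℂ := inner ℂ (chiC ν hA) ψ
  set b : ℂ := inner ℂ (chiC ν hB) ψ
  set c : ℂ := inner ℂ (chiC ν hC) ψ
  have key : ∀ z : ℂ, ‖z‖ ^ 2 = (z * starRingEnd ℂ z).re := by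
    intro z
    rw [Complex.mul_conj, Complex.ofReal_re]
    exact (Complex.normSq_eq_norm_sq z).symm
  simp only [key, map_add, mul_add, add_mul, Complex.add_re]
  ring
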